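/- Let φ be an Orlicz function such that ∑_{n=n₁}^∞ φ(1/n) < ∞ for some n₁ ∈ ℕ. Then A_φ is a closed subset of ces_φ with respect to the Luxemburg norm: if x_m ∈ A_φ for all m and x ∈ ces_φ satisfies ‖x_m − x‖_φ → 0, then x ∈ A_φ. -/

import Mathlib

open scoped ENNReal
open Filter

/-- An Orlicz function: `φ : ℝ → [0,∞]` even, convex, left continuous on `ℝ₊`,
continuous at zero, with `φ 0 = 0` and `φ u → ∞` as `u → ∞`. -/
structure OrliczFunction where
  toFun : ℝ → ℝ≥0∞
  even' : ∀ u : ℝ, toFun (-u) = toFun u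
  convex' : ∀ u v t : ℝ, 0 ≤ t → t ≤ 1 →
    toFun (t * u + (1 - t) * v) ≤ ENNReal.ofReal t * toFun u + ENNReal.ofReal (1 - t) * toFun v
  map_zero' : toFun 0 = 0
  leftContinuous' : ∀ t : ℝ, 0 < t → Tendsto toFun (nhdsWithin t (Set.Iio t)) (nhds (toFun t))
  continuousAtZero' : Tendsto toFun (nhds 0) (nhds 0)
  tendsto_top' : Tendsto toFun atTop (nhds ⊤)

/-- The Cesàro mean `σx(n) = (1/n) ∑_{j=1}^n |x j|` (with `0`-based indexing). -/
noncomputable def cesaroMean (x : ℕ → ℝ) (n : ℕ) : ℝ :=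
  (∑ j ∈ Finset.range (n + 1), |x j|) / (n + 1)

/-- The modular `ρ_φ(x) = ∑_i φ(σx(i))`. -/
noncomputable def rho (φ : OrliczFunction) (x : ℕ → ℝ) : ℝ≥0∞ :=
  ∑' n : ℕ, φ.toFun (cesaroMean x n)

/-- The Cesàro–Orlicz sequence space `ces_φ`. -/
def cesOrlicz (φ : OrliczFunction) : Set (ℕ → ℝ) :=
  {x | ∃ lam : ℝ, 0 < lam ∧ rho φ (fun i => lam * x i) < ⊤}

/-- The Luxemburg norm `‖x‖_φ = inf {λ > 0 : ρ_φ(x/λ) ≤ 1}`. -/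
noncomputable def luxNorm (φ : OrliczFunction) (x : ℕ → ℝ) : ℝ :=
  sInf {lam : ℝ | 0 < lam ∧ rho φ (fun i => x i / lam) ≤ 1}

/-- The subspace `A_φ` of `ces_φ`. -/
def Aphi (φ : OrliczFunction) : Set (ℕ → ℝ) :=
  {x | x ∈ cesOrlicz φ ∧ ∀ k : ℝ, 0 < k → ∃ nk : ℕ,
    ∑' n : ℕ, φ.toFun ((k / ((nk + n + 1 : ℕ) : ℝ)) * ∑ i ∈ Finset.range (nk + n + 1), |x i|) < ⊤}

/-- `∃ n₁, ∑_{n=n₁}^∞ φ(1/n) < ∞`. -/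
def TailFinite (φ : OrliczFunction) : Prop :=
  ∃ n₁ : ℕ, ∑' n : ℕ, φ.toFun (((n₁ + n + 1 : ℕ) : ℝ)⁻¹) < ⊤

/-- The `Δ₂`-condition at zero. -/
def Delta2Zero (φ : OrliczFunction) : Prop :=
  ∃ K : ℝ, 0 < K ∧ ∃ a : ℝ, 0 < a ∧ 0 < φ.toFun a ∧
    ∀ u : ℝ, 0 ≤ u → u ≤ a → φ.toFun (2 * u) ≤ ENNReal.ofReal K * φ.toFun u

/-- `φ` takes only finite values. -/
def FiniteValued (φ : OrliczFunction) : Prop := ∀ u : ℝ, φ.toFun u ≠ ⊤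

lemma orlicz_scale (φ : OrliczFunction) {t : ℝ} (h0 : 0 ≤ t) (h1 : t ≤ 1) (u : ℝ) :
    φ.toFun (t * u) ≤ ENNReal.ofReal t * φ.toFun u := by
  have h := φ.convex' u 0 t h0 h1
  simpa [φ.map_zero'] using h

lemma orlicz_mono (φ : OrliczFunction) {u v : ℝ} (hu : 0 ≤ u) (huv : u ≤ v) :
    φ.toFun u ≤ φ.toFun v := by
  rcases eq_or_lt_of_le huv with rfl | hlt
  · exact le_rfl
  have hv : 0 < v := lt_of_le_of_lt hu hlt
  have ht1 : u / v ≤ 1 := (div_le_one hv).2 huv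
  calc φ.toFun u = φ.toFun ((u / v) * v) := by rw [div_mul_cancel₀ _ hv.ne']
    _ ≤ ENNReal.ofReal (u / v) * φ.toFun v := orlicz_scale φ (div_nonneg hu hv.le) ht1 v
    _ ≤ 1 * φ.toFun v := mul_le_mul_left (ENNReal.ofReal_le_one.2 ht1) _
    _ = φ.toFun v := one_mul _

lemma orlicz_add (φ : OrliczFunction) (a b : ℝ) :
    φ.toFun (a + b) ≤ φ.toFun (2 * a) + φ.toFun (2 * b) := by
  have h := φ.convex' (2 * a) (2 * b) (1 / 2) (by norm_num) (by norm_num)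
  have he : (1 / 2 : ℝ) * (2 * a) + (1 - 1 / 2) * (2 * b) = a + b := by ring
  rw [he] at h
  refine h.trans (add_le_add ?_ ?_) <;>
  · refine (mul_le_mul_left (ENNReal.ofReal_le_one.2 (by norm_num)) _).trans ?_
    rw [one_mul]

lemma cesaroMean_nonneg (x : ℕ → ℝ) (n : ℕ) : 0 ≤ cesaroMean x n := by
  unfold cesaroMean
  positivity

lemma cesaroMean_smul (c : ℝ) (hc : 0 ≤ c) (z : ℕ → ℝ) (n : ℕ) :
    cesaroMean (fun i => c * z i) n = c * cesaroMean z n := by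
  unfold cesaroMean
  simp only [abs_mul, abs_of_nonneg hc]
  rw [← Finset.mul_sum, mul_div_assoc]

lemma cesaroMean_div (c : ℝ) (hc : 0 < c) (z : ℕ → ℝ) (n : ℕ) :
    cesaroMean (fun i => z i / c) n = cesaroMean z n / c := by
  have : ∀ i : ℕ, z i / c = (1 / c) * z i := fun i => by ring
  simp only [this]
  rw [cesaroMean_smul (1 / c) (by positivity) z n]
  ring

lemma cesaroMean_tri (a b : ℕ → ℝ) (n : ℕ) :
    cesaroMean (fun i => a i - b i) n ≤ cesaroMean a n + cesaroMean b n := by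
  unfold cesaroMean
  rw [← add_div]
  gcongr
  rw [← Finset.sum_add_distrib]
  exact Finset.sum_le_sum fun j _ => abs_sub (a j) (b j)

lemma cesaro_form (z : ℕ → ℝ) (k' : ℝ) (p : ℕ) :
    (k' / ((p + 1 : ℕ) : ℝ)) * ∑ i ∈ Finset.range (p + 1), |z i| = k' * cesaroMean z p := by
  unfold cesaroMean
  push_cast
  ring

/-- `A_φ` is closed in `ces_φ` with respect to the Luxemburg norm. -/
theorem stmt_4 (φ : OrliczFunction) (htail : TailFinite φ)
    (x : ℕ → ℝ) (hx : x ∈ cesOrlicz φ) (xs : ℕ → ℕ → ℝ)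
    (hmem : ∀ m, xs m ∈ Aphi φ)
    (hconv : Tendsto (fun m => luxNorm φ (fun i => xs m i - x i)) atTop (nhds 0)) :
    x ∈ Aphi φ := by
  obtain ⟨lamx, hlamx, hrx⟩ := hx
  refine ⟨⟨lamx, hlamx, hrx⟩, ?_⟩
  intro k hk
  obtain ⟨m, hm⟩ := (hconv.eventually (Iio_mem_nhds (show (0:ℝ) < 1/(2*k) by positivity))).exists
  obtain ⟨⟨lams, hlams, hrs⟩, hAm⟩ := hmem m
  set d : ℕ → ℝ := fun i => xs m i - x i with hd
  set μ : ℝ := min lamx lams / 2 with hμ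
  have hμpos : 0 < μ := by positivity
  have h2μ : 2 * μ = min lamx lams := by rw [hμ]; ring
  have hbound : rho φ (fun i => μ * d i) ≤
      rho φ (fun i => lams * xs m i) + rho φ (fun i => lamx * x i) := by
    unfold rho
    rw [← ENNReal.tsum_add]
    refine ENNReal.tsum_le_tsum fun n => ?_
    have hXs := cesaroMean_nonneg (xs m) n
    have hX := cesaroMean_nonneg x n
    have hD := cesaroMean_nonneg d n
    have htri : cesaroMean d n ≤ cesaroMean (xs m) n + cesaroMean x n :=
      cesaroMean_tri (xs m) x n
    calc φ.toFun (cesaroMean (fun i => μ * d i) n)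
        = φ.toFun (μ * cesaroMean d n) := by rw [cesaroMean_smul μ hμpos.le]
      _ ≤ φ.toFun (μ * cesaroMean (xs m) n + μ * cesaroMean x n) := by
          refine orlicz_mono φ (by positivity) ?_
          nlinarith
      _ ≤ φ.toFun (2 * (μ * cesaroMean (xs m) n)) + φ.toFun (2 * (μ * cesaroMean x n)) :=
          orlicz_add φ _ _
      _ ≤ φ.toFun (cesaroMean (fun i => lams * xs m i) n)
            + φ.toFun (cesaroMean (fun i => lamx * x i) n) := by
          rw [cesaroMean_smul lams hlams.le, cesaroMean_smul lamx hlamx.le]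
          refine add_le_add (orlicz_mono φ (by positivity) ?_) (orlicz_mono φ (by positivity) ?_)
          · have h1 : 2 * μ ≤ lams := h2μ ▸ min_le_right _ _
            nlinarith
          · have h1 : 2 * μ ≤ lamx := h2μ ▸ min_le_left _ _
            nlinarith
  have hRfin : rho φ (fun i => μ * d i) < ⊤ :=
    lt_of_le_of_lt hbound (ENNReal.add_lt_top.2 ⟨hrs, hrx⟩)
  have hSne : Set.Nonempty {lam : ℝ | 0 < lam ∧ rho φ (fun i => d i / lam) ≤ 1} := by
    rcases le_or_gt (rho φ (fun i => μ * d i)) 1 with hR | hR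
    · refine ⟨1/μ, by positivity, ?_⟩
      have he : (fun i => d i / (1/μ)) = fun i => μ * d i := by
        funext i; rw [one_div, division_def, inv_inv, mul_comm]
      rw [he]; exact hR
    · have hRt : rho φ (fun i => μ * d i) ≠ ⊤ := hRfin.ne
      set r := (rho φ (fun i => μ * d i)).toReal with hr
      have hr1 : 1 < r := by
        have h := ENNReal.toReal_strict_mono hRt hR
        simpa using h
      have hr0 : 0 < r := by linarith
      refine ⟨r / μ, by positivity, ?_⟩
      have he : (fun i => d i / (r/μ)) = fun i => (1/r) * (μ * d i) := by
        funext i; field_simp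
      rw [he]
      unfold rho
      have hb : ∀ n, φ.toFun (cesaroMean (fun i => (1/r) * (μ * d i)) n)
          ≤ ENNReal.ofReal (1/r) * φ.toFun (cesaroMean (fun i => μ * d i) n) := by
        intro n
        rw [cesaroMean_smul (1/r) (by positivity)]
        exact orlicz_scale φ (by positivity) (by rw [div_le_one hr0]; linarith) _
      calc ∑' n, φ.toFun (cesaroMean (fun i => (1/r) * (μ * d i)) n)
          ≤ ∑' n, ENNReal.ofReal (1/r) * φ.toFun (cesaroMean (fun i => μ * d i) n) :=
            ENNReal.tsum_le_tsum hb
        _ = ENNReal.ofReal (1/r) * rho φ (fun i => μ * d i) := by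
            rw [ENNReal.tsum_mul_left]; rfl
        _ = ENNReal.ofReal (1/r) * ENNReal.ofReal r := by rw [← ENNReal.ofReal_toReal hRt]
        _ = ENNReal.ofReal (1/r * r) := (ENNReal.ofReal_mul (by positivity)).symm
        _ ≤ 1 := by rw [one_div_mul_cancel hr0.ne']; simp
  have hbdd : BddBelow {lam : ℝ | 0 < lam ∧ rho φ (fun i => d i / lam) ≤ 1} :=
    ⟨0, fun lam hlam => hlam.1.le⟩
  unfold luxNorm at hm
  obtain ⟨lam, hlamS, hlamlt⟩ := (csInf_lt_iff hbdd hSne).1 hm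
  have hlam0 : 0 < lam := hlamS.1
  have h2k : 2 * k ≤ 1 / lam := by
    rw [le_div_iff₀ hlam0]
    rw [lt_div_iff₀ (by positivity : (0:ℝ) < 2*k)] at hlamlt
    nlinarith
  obtain ⟨nk, hnk⟩ := hAm (2*k) (by positivity)
  refine ⟨nk, ?_⟩
  have key : ∀ n : ℕ,
      φ.toFun ((k / ((nk + n + 1 : ℕ) : ℝ)) * ∑ i ∈ Finset.range (nk + n + 1), |x i|)
        ≤ φ.toFun ((2*k / ((nk + n + 1 : ℕ) : ℝ)) * ∑ i ∈ Finset.range (nk + n + 1), |xs m i|)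
          + φ.toFun (cesaroMean (fun i => d i / lam) (nk + n)) := by
    intro n
    have hXs := cesaroMean_nonneg (xs m) (nk+n)
    have hX := cesaroMean_nonneg x (nk+n)
    have hD := cesaroMean_nonneg d (nk+n)
    have htri : cesaroMean x (nk+n) ≤ cesaroMean (xs m) (nk+n) + cesaroMean d (nk+n) := by
      have hxe : x = fun i => xs m i - d i := by funext i; simp [hd]
      calc cesaroMean x (nk+n) = cesaroMean (fun i => xs m i - d i) (nk+n) := by rw [← hxe]
        _ ≤ _ := cesaroMean_tri (xs m) d (nk+n)
    rw [cesaro_form x k (nk+n), cesaro_form (xs m) (2*k) (nk+n), cesaroMean_div lam hlam0]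
    calc φ.toFun (k * cesaroMean x (nk+n))
        ≤ φ.toFun (k * cesaroMean (xs m) (nk+n) + k * cesaroMean d (nk+n)) := by
          refine orlicz_mono φ (by positivity) ?_
          nlinarith
      _ ≤ φ.toFun (2 * (k * cesaroMean (xs m) (nk+n)))
            + φ.toFun (2 * (k * cesaroMean d (nk+n))) := orlicz_add φ _ _
      _ ≤ _ := by
          refine add_le_add (le_of_eq (congrArg φ.toFun (by ring)))
            (orlicz_mono φ (by positivity) ?_)
          calc 2 * (k * cesaroMean d (nk+n)) = (2*k) * cesaroMean d (nk+n) := by ring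
            _ ≤ (1/lam) * cesaroMean d (nk+n) := by nlinarith
            _ = cesaroMean d (nk+n) / lam := by ring
  calc (∑' n : ℕ, φ.toFun ((k / ((nk + n + 1 : ℕ) : ℝ)) * ∑ i ∈ Finset.range (nk + n + 1), |x i|))
      ≤ ∑' n : ℕ, (φ.toFun ((2*k / ((nk + n + 1 : ℕ) : ℝ)) * ∑ i ∈ Finset.range (nk + n + 1), |xs m i|)
          + φ.toFun (cesaroMean (fun i => d i / lam) (nk + n))) := ENNReal.tsum_le_tsum key
    _ = (∑' n : ℕ, φ.toFun ((2*k / ((nk + n + 1 : ℕ) : ℝ)) * ∑ i ∈ Finset.range (nk + n + 1), |xs m i|))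
        + ∑' n : ℕ, φ.toFun (cesaroMean (fun i => d i / lam) (nk + n)) := ENNReal.tsum_add
    _ < ⊤ := by
        refine ENNReal.add_lt_top.2 ⟨hnk, ?_⟩
        have hle : (∑' n : ℕ, φ.toFun (cesaroMean (fun i => d i / lam) (nk + n)))
            ≤ ∑' n : ℕ, φ.toFun (cesaroMean (fun i => d i / lam) n) :=
          ENNReal.tsum_comp_le_tsum_of_injective (add_right_injective nk)
            (fun n => φ.toFun (cesaroMean (fun i => d i / lam) n))
        exact lt_of_le_of_lt (hle.trans hlamS.2) ENNReal.one_lt_top
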